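/- Let f ∈ ℤ[x₁,…,x_d] be a nonconstant polynomial with support {p₁,…,p_s} and coefficients c₁,…,c_s. Suppose n ∈ ℝ^d and c ∈ ℝ satisfy n·p₁ − c ≥ 1 and n·p_i − c ≤ −1 for i ∈ {2,…,s}. Then there exists a₀ ∈ ℕ such that for all natural numbers a ≥ a₀, the sign of f evaluated at the point (a^{n₁}, …, a^{n_d}) equals the sign of c₁. -/

import Mathlib

lemma sign_add_of_abs_lt {x y : ℝ} (h : |y| < |x|) :
    Real.sign (x + y) = Real.sign x := by
  rcases lt_trichotomy x 0 with hx | hx | hx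
  · have : x + y < 0 := by
      have := abs_lt.mp h
      rw [abs_of_neg hx] at this
      linarith [this.2]
    rw [Real.sign_of_neg this, Real.sign_of_neg hx]
  · simp [hx, abs_lt] at h; linarith [abs_nonneg y, h]
  · have : 0 < x + y := by
      have := abs_lt.mp h
      rw [abs_of_pos hx] at this
      linarith [this.1]
    rw [Real.sign_of_pos this, Real.sign_of_pos hx]

/-- Lemma 4(ii): under the separation hypotheses, for all sufficiently large
naturals `a`, the sign of `f(a^{n₁},…,a^{n_d}) = Σ_i c_i · a^(n·p_i)` equals
the sign of the coefficient `c 0`. -/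
theorem stmt_6 {d s : ℕ} (hs : 1 ≤ s) (p : Fin s → Fin d → ℕ) (co : Fin s → ℤ)
    (hinj : Function.Injective p) (hco : ∀ i, co i ≠ 0)
    (hnonconst : ∃ i, p i ≠ 0)
    (n : Fin d → ℝ) (c : ℝ)
    (h1 : (∑ j, n j * (p ⟨0, hs⟩ j : ℝ)) - c ≥ 1)
    (h2 : ∀ i : Fin s, i ≠ ⟨0, hs⟩ → (∑ j, n j * (p i j : ℝ)) - c ≤ -1) :
    ∃ a₀ : ℕ, ∀ a : ℕ, a₀ ≤ a →
      Real.sign (∑ i, (co i : ℝ) * (a : ℝ) ^ (∑ j, n j * (p i j : ℝ))) =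
        Real.sign ((co ⟨0, hs⟩ : ℝ)) := by
  set t0 : Fin s := ⟨0, hs⟩ with ht0
  set E : Fin s → ℝ := fun i => ∑ j, n j * (p i j : ℝ) with hE
  set S : ℤ := ∑ i, |co i| with hSdef
  have hS0 : 0 ≤ S := Finset.sum_nonneg fun i _ => abs_nonneg _
  refine ⟨S.toNat + 2, fun a ha => ?_⟩
  have haR : ((S.toNat : ℝ) + 2 : ℝ) ≤ (a : ℝ) := by exact_mod_cast ha
  have hcast : ((S.toNat : ℝ)) = (S : ℝ) := by
    rw [← Int.cast_natCast, Int.toNat_of_nonneg hS0]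
  have hSa : (S : ℝ) < a := by rw [← hcast]; linarith
  have ha1 : (1 : ℝ) ≤ a := by linarith [hcast ▸ (by exact_mod_cast hS0 : (0:ℝ) ≤ (S:ℝ))]
  have hap : (0 : ℝ) < a := by linarith
  -- split off the dominant term
  have hsplit : ∑ i, (co i : ℝ) * (a : ℝ) ^ (E i)
      = (co t0 : ℝ) * (a : ℝ) ^ (E t0)
        + ∑ i ∈ Finset.univ.erase t0, (co i : ℝ) * (a : ℝ) ^ (E i) :=
    (Finset.add_sum_erase _ _ (Finset.mem_univ t0)).symm
  set y : ℝ := ∑ i ∈ Finset.univ.erase t0, (co i : ℝ) * (a : ℝ) ^ (E i) with hy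
  have hybound : |y| ≤ (S : ℝ) * (a : ℝ) ^ (c - 1) := by
    calc |y| ≤ ∑ i ∈ Finset.univ.erase t0, |(co i : ℝ) * (a : ℝ) ^ (E i)| :=
          Finset.abs_sum_le_sum_abs _ _
      _ ≤ ∑ i ∈ Finset.univ.erase t0, |(co i : ℝ)| * (a : ℝ) ^ (c - 1) := by
          refine Finset.sum_le_sum fun i hi => ?_
          rw [abs_mul, abs_of_nonneg (Real.rpow_nonneg hap.le _)]
          refine mul_le_mul_of_nonneg_left ?_ (abs_nonneg _)
          refine Real.rpow_le_rpow_of_exponent_le ha1 ?_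
          have := h2 i (Finset.mem_erase.mp hi).1
          simp only [hE]; linarith
      _ ≤ ∑ i, |(co i : ℝ)| * (a : ℝ) ^ (c - 1) := by
          refine Finset.sum_le_sum_of_subset_of_nonneg (Finset.erase_subset _ _)
            fun i _ _ => mul_nonneg (abs_nonneg _) (Real.rpow_nonneg hap.le _)
      _ = (S : ℝ) * (a : ℝ) ^ (c - 1) := by
          rw [← Finset.sum_mul, hSdef]; push_cast; ring_nf
  have hxbound : (a : ℝ) * (a : ℝ) ^ (c - 1) ≤ |(co t0 : ℝ) * (a : ℝ) ^ (E t0)| := by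
    rw [abs_mul, abs_of_nonneg (Real.rpow_nonneg hap.le _)]
    have h1' : (1 : ℝ) ≤ |(co t0 : ℝ)| := by
      rw [← Int.cast_abs]
      exact_mod_cast Int.one_le_abs (hco t0)
    calc (a : ℝ) * (a : ℝ) ^ (c - 1) = (a : ℝ) ^ ((c - 1) + 1) := by
          rw [Real.rpow_add hap, Real.rpow_one]; ring
      _ ≤ (a : ℝ) ^ (E t0) := by
          refine Real.rpow_le_rpow_of_exponent_le ha1 ?_
          simp only [hE]; linarith
      _ ≤ |(co t0 : ℝ)| * (a : ℝ) ^ (E t0) := by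
          nlinarith [Real.rpow_nonneg hap.le (E t0)]
  have hlt : |y| < |(co t0 : ℝ) * (a : ℝ) ^ (E t0)| := by
    have hpow : (0 : ℝ) < (a : ℝ) ^ (c - 1) := Real.rpow_pos_of_pos hap _
    calc |y| ≤ (S : ℝ) * (a : ℝ) ^ (c - 1) := hybound
      _ < (a : ℝ) * (a : ℝ) ^ (c - 1) := by exact mul_lt_mul_of_pos_right hSa hpow
      _ ≤ _ := hxbound
  rw [hsplit, sign_add_of_abs_lt hlt]
  -- sign of dominant term equals sign of coefficient
  have hapow : (0 : ℝ) < (a : ℝ) ^ (E t0) := Real.rpow_pos_of_pos hap _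
  rcases lt_trichotomy ((co t0 : ℝ)) 0 with hc | hc | hc
  · rw [Real.sign_of_neg (mul_neg_of_neg_of_pos hc hapow), Real.sign_of_neg hc]
  · exact absurd (by exact_mod_cast hc) (hco t0)
  · rw [Real.sign_of_pos (mul_pos hc hapow), Real.sign_of_pos hc]
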